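/- For every prime p > 2 and every n, the map λ(vᵢ) := 1 + 2pi + (i² mod p) for 0 ≤ i ≤ n−1 is an antimagic injection of the p-th power of the path Pₙᵖ into {1,...,p(2n−1)}. Hence MAG(Pₙᵖ) ≤ p(2n−1). -/

import Mathlib

set_option maxHeartbeats 1000000


/-- `pathPower n k` is the `k`-th power `Pₙᵏ` of the path: vertices `0,…,n−1`,
with `i ∼ j` whenever `1 ≤ |i−j| ≤ k`. -/
def pathPower (n k : ℕ) : SimpleGraph (Fin n) where
  Adj i j := i ≠ j ∧ (i : ℕ) ≤ (j : ℕ) + k ∧ (j : ℕ) ≤ (i : ℕ) + k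
  symm := ⟨fun i j ⟨h1, h2, h3⟩ => ⟨h1.symm, h3, h2⟩⟩
  loopless := ⟨fun i h => h.1 rfl⟩

/-- An injection `f : V(G) → ℤ⁺` is antimagic if distinct edges have distinct label sums. -/
def IsAntimagic {V : Type*} (G : SimpleGraph V) (f : V → ℕ) : Prop :=
  ∀ v w x y : V, G.Adj v w → G.Adj x y → s(v, w) ≠ s(x, y) → f v + f w ≠ f x + f y

/-- `MAG G`: the minimum `k` such that `G` has an antimagic injection into `{1,…,k}`. -/
noncomputable def MAG {V : Type*} (G : SimpleGraph V) : ℕ :=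
  sInf {k | ∃ f : V → ℕ, Function.Injective f ∧ (∀ v, f v ∈ Finset.Icc 1 k) ∧ IsAntimagic G f}

lemma div_key (P s1 s2 t1 t2 : ℕ) (hP : 0 < P) (ht1 : t1 < P) (ht2 : t2 < P)
    (h : P * s1 + t1 = P * s2 + t2) : s1 = s2 ∧ t1 = t2 := by
  have h1 : (P * s1 + t1) / P = s1 := by
    rw [Nat.mul_add_div hP, Nat.div_eq_of_lt ht1, Nat.add_zero]
  have h2 : (P * s2 + t2) / P = s2 := by
    rw [Nat.mul_add_div hP, Nat.div_eq_of_lt ht2, Nat.add_zero]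
  have hs : s1 = s2 := by rw [← h1, ← h2, h]
  subst hs
  exact ⟨rfl, Nat.add_left_cancel h⟩

/-- For every odd prime `p`, the map `vᵢ ↦ 1 + 2pi + (i² mod p)` is an antimagic
injection of `Pₙᵖ` into `{1,…,p(2n−1)}`; hence `MAG(Pₙᵖ) ≤ p(2n−1)`. -/
theorem mag_path_power (p n : ℕ) (hp : p.Prime) (hp2 : 2 < p) (hn : 1 ≤ n) :
    Function.Injective (fun i : Fin n => 1 + 2 * p * (i : ℕ) + (i : ℕ) ^ 2 % p) ∧
      (∀ i : Fin n, 1 + 2 * p * (i : ℕ) + (i : ℕ) ^ 2 % p ∈ Finset.Icc 1 (p * (2 * n - 1))) ∧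
      IsAntimagic (pathPower n p) (fun i => 1 + 2 * p * (i : ℕ) + (i : ℕ) ^ 2 % p) ∧
      MAG (pathPower n p) ≤ p * (2 * n - 1) := by
  obtain ⟨m, rfl⟩ : ∃ m, n = m + 1 := ⟨n - 1, by omega⟩
  have hp0 : 0 < p := hp.pos
  have hp2' : p % 2 = 1 := hp.eq_two_or_odd.resolve_left (by omega)
  have hinj : Function.Injective
      (fun i : Fin (m + 1) => 1 + 2 * p * (i : ℕ) + (i : ℕ) ^ 2 % p) := by
    intro i j h
    simp only at h
    have hri : (i : ℕ) ^ 2 % p < 2 * p := lt_of_lt_of_le (Nat.mod_lt _ hp0) (by omega)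
    have hrj : (j : ℕ) ^ 2 % p < 2 * p := lt_of_lt_of_le (Nat.mod_lt _ hp0) (by omega)
    have h' : 2 * p * (i : ℕ) + (i : ℕ) ^ 2 % p = 2 * p * (j : ℕ) + (j : ℕ) ^ 2 % p := by
      linarith
    exact Fin.ext (div_key (2 * p) _ _ _ _ (by omega) hri hrj h').1
  have hmem : ∀ i : Fin (m + 1),
      1 + 2 * p * (i : ℕ) + (i : ℕ) ^ 2 % p ∈ Finset.Icc 1 (p * (2 * (m + 1) - 1)) := by
    intro i
    rw [Finset.mem_Icc]
    have hr : (i : ℕ) ^ 2 % p < p := Nat.mod_lt _ hp0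
    have hi : (i : ℕ) ≤ m := by omega
    have h1 : 2 * p * (i : ℕ) ≤ 2 * p * m := Nat.mul_le_mul_left _ hi
    have h2 : p * (2 * (m + 1) - 1) = 2 * p * m + p := by
      have e : 2 * (m + 1) - 1 = 2 * m + 1 := by omega
      rw [e]; ring
    constructor
    · have := Nat.zero_le (2 * p * (i : ℕ))
      have := Nat.zero_le ((i : ℕ) ^ 2 % p)
      linarith
    · rw [h2]; linarith
  have hanti : IsAntimagic (pathPower (m + 1) p)
      (fun i => 1 + 2 * p * (i : ℕ) + (i : ℕ) ^ 2 % p) := by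
    intro v w x y hvw hxy hne heq
    apply hne
    obtain ⟨hvw1, hvw2, hvw3⟩ := hvw
    obtain ⟨hxy1, hxy2, hxy3⟩ := hxy
    simp only at heq
    have hab : (v : ℕ) ≠ (w : ℕ) := fun h => hvw1 (Fin.ext h)
    have hcd : (x : ℕ) ≠ (y : ℕ) := fun h => hxy1 (Fin.ext h)
    have hra : (v : ℕ) ^ 2 % p < p := Nat.mod_lt _ hp0
    have hrb : (w : ℕ) ^ 2 % p < p := Nat.mod_lt _ hp0
    have hrc : (x : ℕ) ^ 2 % p < p := Nat.mod_lt _ hp0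
    have hrd : (y : ℕ) ^ 2 % p < p := Nat.mod_lt _ hp0
    have h' : 2 * p * ((v : ℕ) + (w : ℕ)) + ((v : ℕ) ^ 2 % p + (w : ℕ) ^ 2 % p)
        = 2 * p * ((x : ℕ) + (y : ℕ)) + ((x : ℕ) ^ 2 % p + (y : ℕ) ^ 2 % p) := by
      have e : ∀ s t : ℕ, 2 * p * (s + t) = 2 * p * s + 2 * p * t := fun s t => by ring
      rw [e, e]
      linarith
    obtain ⟨hs, ht⟩ := div_key (2 * p) _ _ _ _ (by omega) (by omega) (by omega) h'
    have hmod : ((v : ℕ) ^ 2 + (w : ℕ) ^ 2) % p = ((x : ℕ) ^ 2 + (y : ℕ) ^ 2) % p := by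
      rw [Nat.add_mod, Nat.add_mod ((x : ℕ) ^ 2), ht]
    have hdvd0 : (p : ℤ) ∣ (((x : ℕ) ^ 2 + (y : ℕ) ^ 2 : ℕ) : ℤ)
        - (((v : ℕ) ^ 2 + (w : ℕ) ^ 2 : ℕ) : ℤ) := Nat.modEq_iff_dvd.mp hmod
    obtain ⟨k, hk⟩ := hdvd0
    have hs' : ((v : ℕ) : ℤ) + ((w : ℕ) : ℤ) = ((x : ℕ) : ℤ) + ((y : ℕ) : ℤ) := by
      exact_mod_cast hs
    have hdvd : (p : ℤ) ∣ ((((v : ℕ) : ℤ) - (w : ℕ)) - (((x : ℕ) : ℤ) - (y : ℕ)))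
        * ((((v : ℕ) : ℤ) - (w : ℕ)) + (((x : ℕ) : ℤ) - (y : ℕ))) := by
      refine ⟨-2 * k, ?_⟩
      push_cast at hk
      linear_combination (-2 : ℤ) * hk
        - (((v : ℕ) : ℤ) + (w : ℕ) + (x : ℕ) + (y : ℕ)) * hs'
    have hpz : Prime (p : ℤ) := Nat.prime_iff_prime_int.mp hp
    have hB1 : ((v : ℕ) : ℤ) ≤ ((w : ℕ) : ℤ) + p := by exact_mod_cast hvw2
    have hB2 : ((w : ℕ) : ℤ) ≤ ((v : ℕ) : ℤ) + p := by exact_mod_cast hvw3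
    have hB3 : ((x : ℕ) : ℤ) ≤ ((y : ℕ) : ℤ) + p := by exact_mod_cast hxy2
    have hB4 : ((y : ℕ) : ℤ) ≤ ((x : ℕ) : ℤ) + p := by exact_mod_cast hxy3
    rw [Sym2.eq_iff]
    have hgoal : ((v : ℕ) = (x : ℕ) ∧ (w : ℕ) = (y : ℕ))
        ∨ ((v : ℕ) = (y : ℕ) ∧ (w : ℕ) = (x : ℕ)) := by
      rcases hpz.dvd_mul.mp hdvd with hcase | hcase <;>
      · obtain ⟨k, hk⟩ := hcase
        have hk1 : -2 ≤ k := by nlinarith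
        have hk2 : k ≤ 2 := by nlinarith
        interval_cases k <;> omega
    rcases hgoal with ⟨h1, h2⟩ | ⟨h1, h2⟩
    · exact Or.inl ⟨Fin.ext h1, Fin.ext h2⟩
    · exact Or.inr ⟨Fin.ext h1, Fin.ext h2⟩
  exact ⟨hinj, hmem, hanti, Nat.sInf_le ⟨_, hinj, hmem, hanti⟩⟩
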